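/- Suppose γ_t·γ_a·t̄_a ≤ γ_o·d̄ + 2·γ_v·d̄/V_d. Then the total cost function c attains its minimum over [0, L_x] at x_f = 0, i.e., c(0) ≤ c(x) for all x ∈ [0, L_x] (the fixed route is optimal). -/
import Mathlib


/-- Result 1(a): if the access-cost saving per detour does not exceed the extra
operating and vehicle cost, the fixed route (x_f = 0) minimizes total cost. -/
theorem fixed_route_optimal
    (γt γa γw γo γv ta d H Vd Lx Tl : ℝ)
    (hγt : 0 < γt) (hγa : 0 < γa) (hγw : 0 < γw) (hγo : 0 < γo) (hγv : 0 < γv)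
    (hta : 0 < ta) (hd : 0 < d) (hH : 0 < H) (hVd : 0 < Vd) (hLx : 0 < Lx)
    (hTl : 0 ≤ Tl)
    (f : ℝ → ℝ) (hf : ContinuousOn f (Set.Icc 0 Lx))
    (hfpos : ∀ x ∈ Set.Icc (0:ℝ) Lx, 0 ≤ f x)
    (F : ℝ → ℝ) (hF : ∀ x, F x = ∫ t in (0:ℝ)..x, f t)
    (Λ : ℝ) (hΛ : Λ = F Lx)
    (c : ℝ → ℝ)
    (hc : ∀ x, c x =
      γt * γa * ta * (Λ - F x) + γt * γw * Λ * H / 2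
      + (γt / Vd) * (∫ u in (0:ℝ)..Lx, F u)
      + γt * H * d * (F x) ^ 2 / (2 * Vd)
      + γo * Lx / H + γo * d * F x
      + (2 * γv / H) * (Lx / Vd + H * d * F x / Vd + Tl))
    (hcond : γt * γa * ta ≤ γo * d + 2 * γv * d / Vd) :
    ∀ x ∈ Set.Icc (0:ℝ) Lx, c 0 ≤ c x := by
  intro x hx
  have hF0 : F 0 = 0 := by rw [hF]; simp
  have hFx : 0 ≤ F x := by
    rw [hF]
    apply intervalIntegral.integral_nonneg hx.1
    intro t ht
    exact hfpos t ⟨ht.1, ht.2.trans hx.2⟩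
  have key : γt * γa * ta * F x ≤ (γo * d + 2 * γv * d / Vd) * F x :=
    mul_le_mul_of_nonneg_right hcond hFx
  have hq : 0 ≤ γt * H * d * (F x) ^ 2 / (2 * Vd) := by positivity
  have h1 : 2 * γv / H * (Lx / Vd + H * d * F x / Vd + Tl)
      = 2 * γv / H * (Lx / Vd + Tl) + 2 * γv * d / Vd * F x := by
    field_simp; ring
  have h2 : (γo * d + 2 * γv * d / Vd) * F x
      = γo * d * F x + 2 * γv * d / Vd * F x := by ring
  rw [hc x, hc 0, hF0]
  norm_num
  rw [h1]
  linarith [key, hq, h2.le, h2.ge]
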